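/- arXiv:math-ph/0611084 — 5 statements merged into one kernel-verified Lean document; each statement's English description precedes it below -/
import Mathlib

section
/- For b in the Lie algebra t of the maximal torus, the determinant of (1 - exp(ad(b))) restricted to the orthogonal complement t^⊥ of t in g equals ∏_{α ∈ R₊} 4 sin²(π(α,b)). In particular it equals ∏_{α∈R₊}(1 - e^{2πiα(b)})(1 - e^{-2πiα(b)}). -/
open scoped RealInnerProductSpace

/-- The elementary complex identity `(1 - e^{2πix})(1 - e^{-2πix}) = 4 sin²(πx)`. -/
lemma aux_factor (x : ℝ) :
    (1 - Complex.exp (2 * (Real.pi : ℂ) * Complex.I * (x : ℂ))) *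
      (1 - Complex.exp (-(2 * (Real.pi : ℂ) * Complex.I * (x : ℂ))))
    = ((4 * (Real.sin (Real.pi * x)) ^ 2 : ℝ) : ℂ) := by
  have h1 : (2 * (Real.pi : ℂ) * Complex.I * (x : ℂ)) =
      ((2 * Real.pi * x : ℝ) : ℂ) * Complex.I := by push_cast; ring
  rw [h1, Complex.exp_mul_I]
  have h2 : (-(((2 * Real.pi * x : ℝ) : ℂ) * Complex.I)) =
      ((-(2 * Real.pi * x) : ℝ) : ℂ) * Complex.I := by push_cast; ring
  rw [h2, Complex.exp_mul_I]
  rw [← Complex.ofReal_cos, ← Complex.ofReal_sin, ← Complex.ofReal_cos,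
    ← Complex.ofReal_sin, Real.cos_neg, Real.sin_neg]
  have hp := Real.sin_sq_add_cos_sq (Real.pi * x)
  have key : (1 - Real.cos (2 * Real.pi * x)) ^ 2 + (Real.sin (2 * Real.pi * x)) ^ 2
      = 4 * (Real.sin (Real.pi * x)) ^ 2 := by
    have h2m : 2 * Real.pi * x = 2 * (Real.pi * x) := by ring
    rw [h2m, Real.cos_two_mul, Real.sin_two_mul]
    nlinarith [hp]
  have keyC : (((1 - Real.cos (2 * Real.pi * x)) ^ 2 + (Real.sin (2 * Real.pi * x)) ^ 2 : ℝ) : ℂ)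
      = ((4 * (Real.sin (Real.pi * x)) ^ 2 : ℝ) : ℂ) := by exact_mod_cast key
  rw [← keyC, Complex.ofReal_neg]
  push_cast [-Complex.ofReal_sin, -Complex.ofReal_cos]
  linear_combination (-((Real.sin (2 * Real.pi * x) : ℝ) : ℂ) ^ 2) * Complex.I_sq

/-- For `b` in the Cartan subalgebra `t`, the determinant of `1 - exp(ad b)`
on (the complexification `V` of) the orthogonal complement `t^⊥` equals
`∏_{α ∈ R₊} 4 sin²(π(α,b))`, and in particular equals
`∏_{α ∈ R₊} (1 - e^{2πiα(b)})(1 - e^{-2πiα(b)})`.  The root-space decomposition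
of `t^⊥` is encoded by the eigenbasis `B` of `f = exp(ad b)`. -/
theorem stmt_2 {r n : ℕ} (b : EuclideanSpace ℝ (Fin r))
    (Rpos : Fin n → EuclideanSpace ℝ (Fin r))  -- the positive roots
    (V : Type*) [AddCommGroup V] [Module ℂ V] [FiniteDimensional ℂ V]
    (f : Module.End ℂ V) (B : Module.Basis (Fin n ⊕ Fin n) ℂ V)
    (hpos : ∀ i, f (B (Sum.inl i)) =
      Complex.exp (2 * (Real.pi : ℂ) * Complex.I * ((⟪Rpos i, b⟫ : ℝ) : ℂ)) • B (Sum.inl i))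
    (hneg : ∀ i, f (B (Sum.inr i)) =
      Complex.exp (-(2 * (Real.pi : ℂ) * Complex.I * ((⟪Rpos i, b⟫ : ℝ) : ℂ))) • B (Sum.inr i)) :
    LinearMap.det ((1 - f : Module.End ℂ V) : V →ₗ[ℂ] V)
        = ∏ i : Fin n, ((4 * (Real.sin (Real.pi * ⟪Rpos i, b⟫)) ^ 2 : ℝ) : ℂ)
    ∧ LinearMap.det ((1 - f : Module.End ℂ V) : V →ₗ[ℂ] V)
        = ∏ i : Fin n,
            ((1 - Complex.exp (2 * (Real.pi : ℂ) * Complex.I * ((⟪Rpos i, b⟫ : ℝ) : ℂ))) *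
             (1 - Complex.exp (-(2 * (Real.pi : ℂ) * Complex.I * ((⟪Rpos i, b⟫ : ℝ) : ℂ))))) := by
  set d : Fin n ⊕ Fin n → ℂ := fun j =>
    Sum.elim
      (fun i => 1 - Complex.exp (2 * (Real.pi : ℂ) * Complex.I * ((⟪Rpos i, b⟫ : ℝ) : ℂ)))
      (fun i => 1 - Complex.exp (-(2 * (Real.pi : ℂ) * Complex.I * ((⟪Rpos i, b⟫ : ℝ) : ℂ)))) j
    with hd
  have happly : ∀ j, (1 - f : Module.End ℂ V) (B j) = d j • B j := by
    rintro (i | i)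
    · simp [hd, hpos i, sub_smul]
    · simp [hd, hneg i, sub_smul]
  have hmat : LinearMap.toMatrix B B ((1 - f : Module.End ℂ V) : V →ₗ[ℂ] V)
      = Matrix.diagonal d := by
    ext i j
    rw [LinearMap.toMatrix_apply, happly j]
    rcases eq_or_ne i j with h | h
    · subst h; simp [Matrix.diagonal]
    · simp [Matrix.diagonal, h, Finsupp.single_apply, Ne.symm h]
  have hdet : LinearMap.det ((1 - f : Module.End ℂ V) : V →ₗ[ℂ] V) = ∏ j, d j := by
    rw [← LinearMap.det_toMatrix B, hmat, Matrix.det_diagonal]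
  have hsum : (∏ j, d j)
      = ∏ i : Fin n,
          ((1 - Complex.exp (2 * (Real.pi : ℂ) * Complex.I * ((⟪Rpos i, b⟫ : ℝ) : ℂ))) *
           (1 - Complex.exp (-(2 * (Real.pi : ℂ) * Complex.I * ((⟪Rpos i, b⟫ : ℝ) : ℂ))))) := by
    rw [Fintype.prod_sum_type, ← Finset.prod_mul_distrib]
    simp [hd]
  constructor
  · rw [hdet, hsum]
    exact Finset.prod_congr rfl fun i _ => aux_factor _
  · rw [hdet, hsum]
end

section
/- With dim(λ) = S_{λ0}/S_{00}, v_λ = T_{λλ}, and fusion coefficients N^ν_{μλ} = ∑_σ S_{λσ}S_{μσ}S_{ν*σ}/S_{0σ}, one has the identity ∑_{λ∈Λ₊^k} dim(λ) T_{λλ} N^ν_{μλ} = (1/(T_{00}S_{00})) (TST)_{μν}. -/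
/-- With `dim(λ) = S_{λ0}/S_{00}`, `v_λ = T_{λλ}` and fusion coefficients
`N^ν_{μλ} = ∑_σ S_{λσ}S_{μσ}S_{ν*σ}/S_{0σ}`, one has
`∑_{λ∈Λ₊^k} dim(λ) T_{λλ} N^ν_{μλ} = (1/(T_{00}S_{00})) (TST)_{μν}`,
where `S`, `T` are the modular matrices satisfying `(ST)³ = S² = C`. -/
theorem stmt_11 {ι : Type*} [Fintype ι] [DecidableEq ι] (z : ι)
    (cstar : ι → ι) (hinv : Function.Involutive cstar) (hzstar : cstar z = z)
    (S T C : Matrix ι ι ℂ)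
    (hC : ∀ l m, C l m = if l = cstar m then 1 else 0)
    (hsym : S.IsSymm)
    (hmod1 : (S * T) ^ 3 = C) (hmod2 : S * S = C)
    (hdiag : ∀ l m, l ≠ m → T l m = 0)
    (hTz : T z z ≠ 0) (hSz : ∀ s, S z s ≠ 0)
    (N : ι → ι → ι → ℂ)
    (hN : ∀ l m n, N l m n = ∑ s, S l s * S m s * S n s / S z s)
    (Nup : ι → ι → ι → ℂ)
    (hNup : ∀ l m n, Nup l m n = N (cstar l) m n) :
    ∀ μ ν : ι, ∑ l, (S l z / S z z) * T l l * Nup ν μ l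
      = (1 / (T z z * S z z)) * (T * S * T) μ ν := by
  intro μ ν
  have hSzz : S z z ≠ 0 := hSz z
  -- entrywise multiplication lemmas
  have hCM : ∀ (M : Matrix ι ι ℂ) (a b : ι), (C * M) a b = M (cstar a) b := by
    intro M a b
    rw [Matrix.mul_apply]
    calc ∑ p, C a p * M p b = ∑ p, (if cstar a = p then 1 else 0) * M p b := by
          refine Finset.sum_congr rfl fun p _ => ?_
          rw [hC]
          have h : (a = cstar p) ↔ (cstar a = p) :=
            ⟨fun h => by rw [h, hinv], fun h => by rw [← h, hinv]⟩
          simp only [h]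
      _ = M (cstar a) b := by simp
  have hMC : ∀ (M : Matrix ι ι ℂ) (a b : ι), (M * C) a b = M a (cstar b) := by
    intro M a b
    rw [Matrix.mul_apply]
    calc ∑ p, M a p * C p b = ∑ p, M a p * (if p = cstar b then 1 else 0) := by
          refine Finset.sum_congr rfl fun p _ => by rw [hC]
      _ = M a (cstar b) := by simp
  have hTM : ∀ (M : Matrix ι ι ℂ) (a b : ι), (T * M) a b = T a a * M a b := by
    intro M a b
    rw [Matrix.mul_apply]
    rw [Finset.sum_eq_single a]
    · intro p _ hp
      rw [hdiag a p (Ne.symm hp), zero_mul]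
    · intro h; exact absurd (Finset.mem_univ a) h
  have hMT : ∀ (M : Matrix ι ι ℂ) (a b : ι), (M * T) a b = M a b * T b b := by
    intro M a b
    rw [Matrix.mul_apply]
    rw [Finset.sum_eq_single b]
    · intro p _ hp
      rw [hdiag p b hp, mul_zero]
    · intro h; exact absurd (Finset.mem_univ b) h
  -- C² = 1
  have hC2 : C * C = 1 := by
    ext a b
    rw [hCM, hC, Matrix.one_apply]
    congr 1
    simp only [eq_iff_iff]
    constructor
    · intro h; rw [← hinv a, h, hinv]
    · intro h; rw [h]
  -- determinants
  have hdetC : C.det ≠ 0 := by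
    have h1 : C.det * C.det = 1 := by rw [← Matrix.det_mul, hC2, Matrix.det_one]
    intro h; rw [h, zero_mul] at h1; exact zero_ne_one h1
  have hdetS : S.det ≠ 0 := by
    have h1 : S.det * S.det = C.det := by rw [← Matrix.det_mul, hmod2]
    intro h; rw [h, zero_mul] at h1; exact hdetC h1.symm
  have hdetT : T.det ≠ 0 := by
    have h1 : (S.det * T.det) ^ 3 = C.det := by
      rw [← Matrix.det_mul, ← Matrix.det_pow, hmod1]
    intro h
    rw [h, mul_zero] at h1
    simp only [zero_pow, ne_eq, OfNat.ofNat_ne_zero, not_false_eq_true] at h1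
    exact hdetC h1.symm
  have hTne : ∀ l, T l l ≠ 0 := by
    have hTd : T = Matrix.diagonal fun l => T l l := by
      ext a b
      by_cases h : a = b
      · subst h; simp [Matrix.diagonal_apply_eq]
      · rw [hdiag a b h, Matrix.diagonal_apply_ne _ h]
    intro l h
    apply hdetT
    rw [hTd, Matrix.det_diagonal]
    exact Finset.prod_eq_zero (Finset.mem_univ l) h
  -- cancellation by S on the left
  have hScancel : ∀ A B : Matrix ι ι ℂ, S * A = S * B → A = B := by
    intro A B h
    have h2 := congrArg (fun X => S⁻¹ * X) h
    simpa only [← Matrix.mul_assoc, Matrix.nonsing_inv_mul S (isUnit_iff_ne_zero.2 hdetS),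
      Matrix.one_mul] using h2
  -- commutation relations
  have hCS : C * S = S * C := by rw [← hmod2, Matrix.mul_assoc]
  have hCT : C * T = T * C := by
    apply hScancel
    have h1 : C * (S * T) = (S * T) * C := by
      rw [← hmod1, ← pow_succ, ← pow_succ']
    calc S * (C * T) = (S * C) * T := by rw [Matrix.mul_assoc]
      _ = (C * S) * T := by rw [hCS]
      _ = C * (S * T) := by rw [Matrix.mul_assoc]
      _ = (S * T) * C := h1
      _ = S * (T * C) := by rw [Matrix.mul_assoc]
  have hSstar : ∀ a b, S (cstar a) b = S a (cstar b) := by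
    intro a b
    calc S (cstar a) b = (C * S) a b := (hCM S a b).symm
      _ = (S * C) a b := by rw [hCS]
      _ = S a (cstar b) := hMC S a b
  have hTstar : ∀ a, T (cstar a) (cstar a) = T a a := by
    intro a
    calc T (cstar a) (cstar a) = (C * T) a (cstar a) := (hCM T a (cstar a)).symm
      _ = (T * C) a (cstar a) := by rw [hCT]
      _ = T a a * C a (cstar a) := hTM C a (cstar a)
      _ = T a a := by rw [hC]; simp [hinv a]
  -- T S T S T = S, entrywise
  have hTSTST : T * (S * T * S) * T = S := by
    apply hScancel
    have h1 : S * (T * (S * T * S) * T) = (S * T) ^ 3 := by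
      rw [pow_succ, pow_two]
      simp only [Matrix.mul_assoc]
    rw [h1, hmod1, ← hmod2]
  have hKey : ∀ a b, T a a * (S * T * S) a b * T b b = S a b := by
    intro a b
    calc T a a * (S * T * S) a b * T b b = (T * (S * T * S)) a b * T b b := by rw [hTM]
      _ = ((T * (S * T * S)) * T) a b := (hMT _ a b).symm
      _ = S a b := by rw [hTSTST]
  have hSTS_apply : ∀ a b, (S * T * S) a b = ∑ p, S a p * T p p * S p b := by
    intro a b
    rw [Matrix.mul_apply]
    refine Finset.sum_congr rfl fun p _ => ?_
    rw [hMT]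
  have hSTSz : ∀ σ, (S * T * S) z σ ≠ 0 := by
    intro σ h
    exact hSz σ (by rw [← hKey z σ, h, mul_zero, zero_mul])
  -- the per-σ computation
  have hstep : ∀ σ, ∑ l, (S l z / S z z) * T l l * (S (cstar ν) σ * S μ σ * S l σ / S z σ)
      = S μ σ * ((S * T * S) σ (cstar ν)) * T ν ν / (S z z * T z z) := by
    intro σ
    have e1 : ∑ l, (S l z / S z z) * T l l * (S (cstar ν) σ * S μ σ * S l σ / S z σ)
        = (S (cstar ν) σ * S μ σ / (S z z * S z σ)) * ∑ l, S z l * T l l * S l σ := by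
      rw [Finset.mul_sum]
      refine Finset.sum_congr rfl fun l _ => ?_
      rw [hsym.apply z l]
      field_simp
    rw [e1, ← hSTS_apply z σ]
    have e3 := hKey σ (cstar ν)
    rw [hTstar ν] at e3
    have hν : S (cstar ν) σ = T σ σ * (S * T * S) σ (cstar ν) * T ν ν := by
      rw [← hsym.apply σ (cstar ν)] at e3
      exact e3.symm
    rw [hν, ← hKey z σ]
    field_simp [hTne σ, hTz, hSzz, hSTSz σ]
  have hsum : ∑ σ, S μ σ * (S * T * S) σ (cstar ν) = T μ μ * S μ ν := by
    have h1 : ∑ σ, S μ σ * (S * T * S) σ (cstar ν) = (S * (S * T * S)) μ (cstar ν) :=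
      (Matrix.mul_apply).symm
    have h2 : S * (S * T * S) = C * (T * S) := by
      calc S * (S * T * S) = (S * S) * (T * S) := by simp only [Matrix.mul_assoc]
        _ = C * (T * S) := by rw [hmod2]
    rw [h1, h2, hCM (T * S) μ (cstar ν), hTM S (cstar μ) (cstar ν), hTstar μ,
      hSstar μ (cstar ν), hinv ν]
  -- put everything together
  simp only [hNup, hN]
  calc ∑ l, (S l z / S z z) * T l l * ∑ σ, S (cstar ν) σ * S μ σ * S l σ / S z σ
      = ∑ l, ∑ σ, (S l z / S z z) * T l l * (S (cstar ν) σ * S μ σ * S l σ / S z σ) := by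
        refine Finset.sum_congr rfl fun l _ => ?_
        rw [Finset.mul_sum]
    _ = ∑ σ, ∑ l, (S l z / S z z) * T l l * (S (cstar ν) σ * S μ σ * S l σ / S z σ) :=
        Finset.sum_comm
    _ = ∑ σ, S μ σ * ((S * T * S) σ (cstar ν)) * T ν ν / (S z z * T z z) :=
        Finset.sum_congr rfl fun σ _ => hstep σ
    _ = (∑ σ, S μ σ * (S * T * S) σ (cstar ν)) * (T ν ν / (S z z * T z z)) := by
        rw [Finset.sum_mul]
        exact Finset.sum_congr rfl fun σ _ => (mul_div_assoc _ _ _)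
    _ = (T μ μ * S μ ν) * (T ν ν / (S z z * T z z)) := by rw [hsum]
    _ = (1 / (T z z * S z z)) * (T * S * T) μ ν := by
        have h3 : (T * S * T) μ ν = T μ μ * S μ ν * T ν ν := by
          rw [hMT, hTM]
        rw [h3]
        ring
end

section
/- Assuming the modular relations (ST)³ = S² = C and the Verlinde formula N^{σ₀}_{λσ₂} = ∑_σ S_{λσ}S_{σ₂σ}S_{σ₀*σ}/S_{0σ}, one has ∑_{σ₂,σ₀ ∈ Λ₊^k} T_{σ₂σ₂} T_{σ₀σ₀}^{-1} S_{νσ₂} S_{μσ₀} N^{σ₀}_{λσ₂} = (T_{μμ}/T_{νν}) N_{λμν}. -/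
/-- Assuming the modular relations `(ST)³ = S² = C` and the Verlinde formula
`N^{σ₀}_{λσ₂} = ∑_σ S_{λσ}S_{σ₂σ}S_{σ₀*σ}/S_{0σ}`, one has
`∑_{σ₂,σ₀} T_{σ₂σ₂} T_{σ₀σ₀}⁻¹ S_{νσ₂} S_{μσ₀} N^{σ₀}_{λσ₂}
  = (T_{μμ}/T_{νν}) N_{λμν}`. -/
theorem stmt_12 {ι : Type*} [Fintype ι] [DecidableEq ι] (z : ι)
    (cstar : ι → ι) (hinv : Function.Involutive cstar) (hzstar : cstar z = z)
    (S T C : Matrix ι ι ℂ)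
    (hC : ∀ l m, C l m = if l = cstar m then 1 else 0)
    (hsym : S.IsSymm)
    (hmod1 : (S * T) ^ 3 = C) (hmod2 : S * S = C)
    (hdiag : ∀ l m, l ≠ m → T l m = 0)
    (hTnz : ∀ l, T l l ≠ 0) (hSz : ∀ s, S z s ≠ 0)
    (N : ι → ι → ι → ℂ)
    (hN : ∀ l m n, N l m n = ∑ s, S l s * S m s * S n s / S z s)
    (Nup : ι → ι → ι → ℂ)
    (hNup : ∀ l m n, Nup l m n = N (cstar l) m n) :
    ∀ lam mu nu : ι,
      ∑ s2, ∑ s0, T s2 s2 * (T s0 s0)⁻¹ * S nu s2 * S mu s0 * Nup s0 lam s2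
        = T mu mu / T nu nu * N lam mu nu := by
  intro lam mu nu
  classical
  set d : ι → ℂ := fun l => T l l with hd
  have hTd : T = Matrix.diagonal d := by
    ext l m
    rcases eq_or_ne l m with rfl | h
    · simp [Matrix.diagonal_apply_eq, hd]
    · simp [Matrix.diagonal_apply_ne _ h, hdiag l m h]
  set Dinv : Matrix ι ι ℂ := Matrix.diagonal (fun l => (d l)⁻¹) with hDinv
  have hdz : ∀ l, d l ≠ 0 := hTnz
  have hone : (fun l => d l * (d l)⁻¹) = fun _ => (1 : ℂ) := by
    funext l; exact mul_inv_cancel₀ (hdz l)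
  have hone' : (fun l => (d l)⁻¹ * d l) = fun _ => (1 : ℂ) := by
    funext l; exact inv_mul_cancel₀ (hdz l)
  have hTDinv : T * Dinv = 1 := by
    rw [hTd, hDinv, Matrix.diagonal_mul_diagonal, hone, Matrix.diagonal_one]
  have hDinvT : Dinv * T = 1 := by
    rw [hTd, hDinv, Matrix.diagonal_mul_diagonal, hone', Matrix.diagonal_one]
  have hCC : C * C = 1 := by
    ext l m
    rw [Matrix.mul_apply]
    simp only [hC, Matrix.one_apply, ite_mul, one_mul, zero_mul]
    rw [Finset.sum_eq_single (cstar m)]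
    · simp [hinv m]
    · intro b _ hb; simp [hb]
    · intro h; exact absurd (Finset.mem_univ _) h
  have hCS : C * S = S * C := by rw [← hmod2, mul_assoc]
  have hSCS : S * (C * S) = 1 := by
    rw [hCS, ← mul_assoc, hmod2, hCC]
  have L1 : ∀ X : Matrix ι ι ℂ, S * (S * X) = C * X := by
    intro X; rw [← mul_assoc, hmod2]
  have L2 : ∀ X : Matrix ι ι ℂ, C * (C * X) = X := by
    intro X; rw [← mul_assoc, hCC, one_mul]
  have hmod1' : S * (T * (S * (T * (S * T)))) = C := by
    rw [← hmod1]
    simp only [pow_succ, pow_zero, one_mul, mul_assoc]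
  have h1 : T * (S * (T * (S * T))) = S := by
    have h := congrArg (fun X => C * (S * X)) hmod1'
    simp only [L1, L2] at h
    rw [h, ← hCS]
    exact L2 S
  -- bracket 1 : S*(T*S) = Dinv*(S*Dinv)
  have h2 : S * (T * S) = Dinv * (S * Dinv) := by
    have e1 := congrArg (Dinv * ·) h1
    simp only [← mul_assoc] at e1
    rw [hDinvT, one_mul] at e1
    -- e1 : S * T * (wrong assoc?)  normalize
    simp only [mul_assoc] at e1
    -- e1 : S * (T * (S * T)) = Dinv * S
    have e2 := congrArg (· * Dinv) e1
    simp only [mul_assoc] at e2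
    rw [hTDinv, mul_one] at e2
    exact e2
  -- bracket 2 : T*(S*T) = S*(Dinv*(C*S))
  have h3 : S * (Dinv * (C * S)) = T * (S * T) := by
    have e1 := congrArg (· * Dinv) h1
    simp only [mul_assoc] at e1
    rw [hTDinv, mul_one] at e1
    -- e1 : T * (S * (T * S)) = S * Dinv
    have e2 := congrArg (· * (C * S)) e1
    simp only [mul_assoc] at e2
    rw [hSCS, mul_one] at e2
    exact e2.symm
  -- entries of C*S
  have eCS : ∀ a b, (C * S) a b = S (cstar a) b := by
    intro a b
    rw [Matrix.mul_apply]
    simp only [hC, ite_mul, one_mul, zero_mul]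
    rw [Finset.sum_eq_single (cstar a)]
    · rw [hinv a]; simp
    · intro c _ hc
      rw [if_neg]
      intro h; exact hc (by rw [h, hinv])
    · intro h; exact absurd (Finset.mem_univ _) h
  -- triple sum rearrangement
  calc
    ∑ s2, ∑ s0, T s2 s2 * (T s0 s0)⁻¹ * S nu s2 * S mu s0 * Nup s0 lam s2
      = ∑ s, ∑ s2, ∑ s0, T s2 s2 * (T s0 s0)⁻¹ * S nu s2 * S mu s0 *
          (S (cstar s0) s * S lam s * S s2 s / S z s) := by
        simp only [hNup, hN, Finset.mul_sum]
        exact (Finset.sum_congr rfl fun s2 _ => Finset.sum_comm).trans Finset.sum_comm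
    _ = ∑ s, (S lam s / S z s) * ((S * (T * S)) nu s) * ((S * (Dinv * (C * S))) mu s) := by
        refine Finset.sum_congr rfl fun s _ => ?_
        rw [Matrix.mul_apply, Matrix.mul_apply, mul_assoc, Finset.sum_mul_sum,
          Finset.mul_sum]
        refine Finset.sum_congr rfl fun s2 _ => ?_
        rw [Finset.mul_sum]
        refine Finset.sum_congr rfl fun s0 _ => ?_
        rw [hDinv, hTd]
        simp only [Matrix.diagonal_mul, Matrix.mul_diagonal, Matrix.diagonal_apply_eq, eCS]
        ring
    _ = ∑ s, (S lam s / S z s) * ((Dinv * (S * Dinv)) nu s) * ((T * (S * T)) mu s) := by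
        rw [h2, h3]
    _ = T mu mu / T nu nu * N lam mu nu := by
        rw [hN, Finset.mul_sum]
        refine Finset.sum_congr rfl fun s _ => ?_
        rw [hDinv, hTd]
        simp only [Matrix.diagonal_mul, Matrix.mul_diagonal, Matrix.diagonal_apply_eq]
        field_simp [hdz nu, hdz s, hSz s]
end

section
/- For the shadow of the colored link in S²×S¹ consisting of three disjoint unknotted Jordan loops with colors λ, μ, ν, each winding once around S¹ and projecting to three disjoint circles in S² (so there are faces Y₁,Y₂,Y₃ with χ = gleam = 1 and an outer face Y₀ with χ = −1, gleam = −3), the state sum ∑_{σ₀,σ₁,σ₂,σ₃∈Λ₊^k} dim(σ₁)dim(σ₂)dim(σ₃)dim(σ₀)^{-1} N^{σ₀}_{σ₁λ}N^{σ₀}_{σ₂μ}N^{σ₀}_{σ₃ν} T_{σ₁σ₁}T_{σ₂σ₂}T_{σ₃σ₃}T_{σ₀σ₀}^{-3} equals (T_{λλ}T_{μμ}T_{νν}/(T_{00}³ S_{00}²)) · N_{λμν}. -/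
open Matrix

private noncomputable def TiM {ι : Type*} [DecidableEq ι] (T : Matrix ι ι ℂ) : Matrix ι ι ℂ :=
  Matrix.of fun l m => if l = m then (T l l)⁻¹ else 0

/-- Shadow state sum for three disjoint circles in `S² × S¹`, each colored
`λ, μ, ν` and winding once around `S¹` (faces `Y₁,Y₂,Y₃` with `χ = gleam = 1`,
outer face `Y₀` with `χ = −1`, `gleam = −3`):
`∑_{σ₀σ₁σ₂σ₃} dim σ₁ dim σ₂ dim σ₃ (dim σ₀)⁻¹
   N^{σ₀}_{σ₁λ}N^{σ₀}_{σ₂μ}N^{σ₀}_{σ₃ν} T_{σ₁σ₁}T_{σ₂σ₂}T_{σ₃σ₃}T_{σ₀σ₀}^{-3}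
 = (T_{λλ}T_{μμ}T_{νν}/(T_{00}³S_{00}²)) N_{λμν}`. -/
theorem stmt_13 {ι : Type*} [Fintype ι] [DecidableEq ι] (z : ι)
    (cstar : ι → ι) (hinv : Function.Involutive cstar) (hzstar : cstar z = z)
    (S T C : Matrix ι ι ℂ)
    (hC : ∀ l m, C l m = if l = cstar m then 1 else 0)
    (hsym : S.IsSymm)
    (hmod1 : (S * T) ^ 3 = C) (hmod2 : S * S = C)
    (hdiag : ∀ l m, l ≠ m → T l m = 0)
    (hTnz : ∀ l, T l l ≠ 0) (hSz : ∀ s, S z s ≠ 0) (hSz' : ∀ s, S s z ≠ 0)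
    (N : ι → ι → ι → ℂ)
    (hN : ∀ l m n, N l m n = ∑ s, S l s * S m s * S n s / S z s)
    (Nup : ι → ι → ι → ℂ)
    (hNup : ∀ l m n, Nup l m n = N (cstar l) m n) :
    ∀ lam mu nu : ι,
      ∑ s0, ∑ s1, ∑ s2, ∑ s3,
        (S s1 z / S z z) * (S s2 z / S z z) * (S s3 z / S z z) *
          (S s0 z / S z z)⁻¹ *
          (Nup s0 s1 lam * Nup s0 s2 mu * Nup s0 s3 nu) *
          (T s1 s1 * T s2 s2 * T s3 s3 * ((T s0 s0)⁻¹) ^ 3)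
        = T lam lam * T mu mu * T nu nu / ((T z z) ^ 3 * (S z z) ^ 2) *
            N lam mu nu := by
  -- basic entry lemmas
  have eS : ∀ l m, S l m = S m l := fun l m => (hsym.apply l m).symm
  have hstar_iff : ∀ l m : ι, (l = cstar m) ↔ (m = cstar l) :=
    fun l m => ⟨fun h => by rw [h, hinv], fun h => by rw [h, hinv]⟩
  set Ti := TiM T with hTidef
  have Timul : ∀ (A : Matrix ι ι ℂ) (l m : ι), (Ti * A) l m = (T l l)⁻¹ * A l m := by
    intro A l m
    simp [Matrix.mul_apply, hTidef, TiM, ite_mul, Finset.sum_ite_eq]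
  have mulTi : ∀ (A : Matrix ι ι ℂ) (l m : ι), (A * Ti) l m = A l m * (T m m)⁻¹ := by
    intro A l m
    simp [Matrix.mul_apply, hTidef, TiM, mul_ite, Finset.sum_ite_eq']
  have mulT : ∀ (A : Matrix ι ι ℂ) (l m : ι), (A * T) l m = A l m * T m m := by
    intro A l m
    rw [Matrix.mul_apply]
    exact Finset.sum_eq_single m (fun k _ hk => by rw [hdiag k m hk, mul_zero])
      (fun h => absurd (Finset.mem_univ m) h)
  have Tmul : ∀ (A : Matrix ι ι ℂ) (l m : ι), (T * A) l m = T l l * A l m := by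
    intro A l m
    rw [Matrix.mul_apply]
    exact Finset.sum_eq_single l (fun k _ hk => by rw [hdiag l k (Ne.symm hk), zero_mul])
      (fun h => absurd (Finset.mem_univ l) h)
  have mulC : ∀ (A : Matrix ι ι ℂ) (l m : ι), (A * C) l m = A l (cstar m) := by
    intro A l m
    simp [Matrix.mul_apply, hC, mul_ite, Finset.sum_ite_eq']
  have Cmul : ∀ (A : Matrix ι ι ℂ) (l m : ι), (C * A) l m = A (cstar l) m := by
    intro A l m
    have hc : ∀ k, C l k = if k = cstar l then 1 else 0 := fun k => by
      rw [hC]; exact if_congr (hstar_iff l k) rfl rfl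
    simp [Matrix.mul_apply, hc, ite_mul, Finset.sum_ite_eq']
  have hTTi : T * Ti = 1 := by
    ext l m
    rw [mulTi, Matrix.one_apply]
    by_cases h : l = m
    · subst h; simp [mul_inv_cancel₀ (hTnz l)]
    · simp [h, hdiag l m h]
  have hTiT : Ti * T = 1 := by
    ext l m
    rw [Timul, Matrix.one_apply]
    by_cases h : l = m
    · subst h; simp [inv_mul_cancel₀ (hTnz l)]
    · simp [h, hdiag l m h]
  have hCC : C * C = 1 := by
    ext l m
    rw [Cmul, hC, Matrix.one_apply]
    exact if_congr hinv.injective.eq_iff rfl rfl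
  have hCScomm : C * S = S * C := by
    rw [← hmod2]; exact (Matrix.mul_assoc S S S)
  have hCC1 : ∀ X : Matrix ι ι ℂ, C * (C * X) = X := fun X => by
    rw [← Matrix.mul_assoc, hCC, Matrix.one_mul]
  have hSS : ∀ X : Matrix ι ι ℂ, S * (S * X) = C * X := fun X => by
    rw [← Matrix.mul_assoc, hmod2]
  have TiT_cancel : ∀ X : Matrix ι ι ℂ, Ti * (T * X) = X := fun X => by
    rw [← Matrix.mul_assoc, hTiT, Matrix.one_mul]
  -- expand modular relation
  have h3' : S * (T * (S * (T * (S * T)))) = C := by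
    have h := hmod1
    rw [pow_succ, pow_succ, pow_one] at h
    simpa only [Matrix.mul_assoc] using h
  -- TSTST = S
  have hA : T * (S * (T * (S * T))) = S := by
    have h := congrArg (fun X => C * (S * X)) h3'
    rw [hSS, hCC1, ← hCScomm, hCC1] at h
    exact h
  -- TSTS = S Ti
  have hB : T * (S * (T * S)) = S * Ti := by
    have h := congrArg (fun X => X * Ti) hA
    simp only [Matrix.mul_assoc] at h
    rw [hTTi, Matrix.mul_one] at h
    exact h
  -- TSTC = S Ti S
  have hM1 : T * (S * (T * C)) = S * (Ti * S) := by
    have h := congrArg (fun X => X * S) hB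
    simp only [Matrix.mul_assoc] at h
    rw [hmod2] at h
    exact h
  -- STS = Ti S Ti
  have hM2 : S * (T * S) = Ti * (S * Ti) := by
    have h := congrArg (fun X => Ti * (X * Ti)) hA
    simp only [Matrix.mul_assoc] at h
    rw [hTTi, Matrix.mul_one, TiT_cancel] at h
    exact h
  -- T commutes with C via transpose
  have hTsymm : Tᵀ = T := by
    ext l m
    rw [Matrix.transpose_apply]
    by_cases h : l = m
    · rw [h]
    · rw [hdiag m l (Ne.symm h), hdiag l m h]
  have hCsym : Cᵀ = C := by
    ext l m
    rw [Matrix.transpose_apply, hC, hC]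
    exact if_congr (hstar_iff m l) rfl rfl
  have hSsymm : Sᵀ = S := hsym
  have hTS3' : T * (S * (T * (S * (T * S)))) = C := by
    have h := congrArg Matrix.transpose h3'
    simp only [Matrix.transpose_mul, hTsymm, hSsymm, hCsym, Matrix.mul_assoc] at h
    exact h
  have hTC : T * C = C * T := by
    calc T * C = T * (S * (T * (S * (T * (S * T))))) := by rw [h3']
      _ = (T * (S * (T * (S * (T * S))))) * T := by simp only [Matrix.mul_assoc]
      _ = C * T := by rw [hTS3']
  have hTstar : ∀ l, T (cstar l) (cstar l) = T l l := by
    intro l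
    have h := congrFun (congrFun hTC l) (cstar l)
    rw [mulC, Cmul, hinv] at h
    exact h.symm
  have hSstar : ∀ l m, S (cstar l) m = S l (cstar m) := by
    intro l m
    have h := congrFun (congrFun hCScomm l) m
    rw [mulC, Cmul] at h
    exact h
  -- entrywise versions of the two key matrix identities
  have eSTS : ∀ s, (∑ σ, S z σ * (T σ σ * S σ s)) = (T z z)⁻¹ * (S z s * (T s s)⁻¹) := by
    intro s
    have h := congrFun (congrFun hM2 z) s
    have hL : (S * (T * S)) z s = ∑ σ, S z σ * (T σ σ * S σ s) := by
      rw [Matrix.mul_apply]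
      exact Finset.sum_congr rfl fun σ _ => by rw [Tmul]
    have hR : (Ti * (S * Ti)) z s = (T z z)⁻¹ * (S z s * (T s s)⁻¹) := by
      rw [Timul, mulTi]
    rw [hL, hR] at h
    exact h
  have eSTiS : ∀ l m, (∑ s, S l s * ((T s s)⁻¹ * S s m))
      = T l l * (S l (cstar m) * T (cstar m) (cstar m)) := by
    intro l m
    have h := congrFun (congrFun hM1 l) m
    have hL : (T * (S * (T * C))) l m = T l l * (S l (cstar m) * T (cstar m) (cstar m)) := by
      rw [Tmul, Matrix.mul_apply]
      congr 1
      have h1 : ∀ k, S l k * (T * C) k m = S l k * T k (cstar m) := fun k => by rw [mulC]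
      rw [Finset.sum_congr rfl fun k _ => h1 k]
      exact Finset.sum_eq_single (cstar m)
        (fun k _ hk => by rw [hdiag k (cstar m) hk, mul_zero])
        (fun h => absurd (Finset.mem_univ _) h)
    have hR : (S * (Ti * S)) l m = ∑ s, S l s * ((T s s)⁻¹ * S s m) := by
      rw [Matrix.mul_apply]
      exact Finset.sum_congr rfl fun s _ => by rw [Timul]
    rw [hL, hR] at h
    exact h.symm
  -- symmetry of N in last two arguments
  have hNsym2 : ∀ a b c, N a b c = N a c b := by
    intro a b c
    rw [hN, hN]
    exact Finset.sum_congr rfl fun s _ => by ring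
  -- the key identity
  have keyK : ∀ a b : ι, (∑ σ, (S σ z / S z z) * T σ σ * N (cstar b) a σ)
      = T a a * (S a b * T b b) / (T z z * S z z) := by
    intro a b
    calc (∑ σ, (S σ z / S z z) * T σ σ * N (cstar b) a σ)
        = ∑ σ, ∑ s, (S (cstar b) s * S a s / (S z s * S z z)) * (S z σ * (T σ σ * S σ s)) := by
          refine Finset.sum_congr rfl fun σ _ => ?_
          rw [hN, Finset.mul_sum]
          refine Finset.sum_congr rfl fun s _ => ?_
          rw [eS σ z]
          have h1 := hSz s; have h2 := hSz z
          field_simp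
      _ = ∑ s, ∑ σ, (S (cstar b) s * S a s / (S z s * S z z)) * (S z σ * (T σ σ * S σ s)) :=
          Finset.sum_comm
      _ = ∑ s, (S (cstar b) s * S a s / (S z s * S z z)) * ((T z z)⁻¹ * (S z s * (T s s)⁻¹)) := by
          refine Finset.sum_congr rfl fun s _ => ?_
          rw [← Finset.mul_sum, eSTS s]
      _ = ∑ s, (S (cstar b) s * ((T s s)⁻¹ * S s a)) * ((T z z) * (S z z))⁻¹ := by
          refine Finset.sum_congr rfl fun s _ => ?_
          rw [eS a s]
          have h1 := hSz s; have h2 := hSz z; have h3 := hTnz z; have h4 := hTnz s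
          field_simp
      _ = (∑ s, S (cstar b) s * ((T s s)⁻¹ * S s a)) * ((T z z) * (S z z))⁻¹ :=
          (Finset.sum_mul _ _ _).symm
      _ = (T (cstar b) (cstar b) * (S (cstar b) (cstar a) * T (cstar a) (cstar a)))
            * ((T z z) * (S z z))⁻¹ := by rw [eSTiS (cstar b) a]
      _ = T a a * (S a b * T b b) / (T z z * S z z) := by
          rw [hTstar, hTstar, hSstar, hinv, eS b a, div_eq_mul_inv]
          ring
  -- main computation
  intro lam mu nu
  simp only [hNup]
  have hfac : ∀ s0 : ι,
      (∑ s1, ∑ s2, ∑ s3,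
        (S s1 z / S z z) * (S s2 z / S z z) * (S s3 z / S z z) *
          (S s0 z / S z z)⁻¹ *
          (N (cstar s0) s1 lam * N (cstar s0) s2 mu * N (cstar s0) s3 nu) *
          (T s1 s1 * T s2 s2 * T s3 s3 * ((T s0 s0)⁻¹) ^ 3))
      = ((S s0 z / S z z)⁻¹ * ((T s0 s0)⁻¹) ^ 3) *
          ((∑ s1, (S s1 z / S z z) * T s1 s1 * N (cstar s0) lam s1) *
           ((∑ s2, (S s2 z / S z z) * T s2 s2 * N (cstar s0) mu s2) *
            (∑ s3, (S s3 z / S z z) * T s3 s3 * N (cstar s0) nu s3))) := by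
    intro s0
    rw [Finset.sum_mul_sum, Finset.sum_mul_sum]
    simp only [Finset.mul_sum]
    refine Finset.sum_congr rfl fun s1 _ => Finset.sum_congr rfl fun s2 _ =>
      Finset.sum_congr rfl fun s3 _ => ?_
    rw [hNsym2 (cstar s0) s1 lam, hNsym2 (cstar s0) s2 mu, hNsym2 (cstar s0) s3 nu]
    ring
  calc (∑ s0, ∑ s1, ∑ s2, ∑ s3,
        (S s1 z / S z z) * (S s2 z / S z z) * (S s3 z / S z z) *
          (S s0 z / S z z)⁻¹ *
          (N (cstar s0) s1 lam * N (cstar s0) s2 mu * N (cstar s0) s3 nu) *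
          (T s1 s1 * T s2 s2 * T s3 s3 * ((T s0 s0)⁻¹) ^ 3))
      = ∑ s0 : ι, ((S s0 z / S z z)⁻¹ * ((T s0 s0)⁻¹) ^ 3) *
          ((T lam lam * (S lam s0 * T s0 s0) / (T z z * S z z)) *
           ((T mu mu * (S mu s0 * T s0 s0) / (T z z * S z z)) *
            (T nu nu * (S nu s0 * T s0 s0) / (T z z * S z z)))) := by
        refine Finset.sum_congr rfl fun s0 _ => ?_
        rw [hfac s0, keyK lam s0, keyK mu s0, keyK nu s0]
    _ = T lam lam * T mu mu * T nu nu / ((T z z) ^ 3 * (S z z) ^ 2) * N lam mu nu := by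
        rw [hN, Finset.mul_sum]
        refine Finset.sum_congr rfl fun s0 _ => ?_
        rw [eS s0 z]
        have h1 := hSz s0; have h2 := hSz z; have h3 := hTnz s0; have h4 := hTnz z
        field_simp
end

section
/- Using S² = C and the symmetry of S, one has ∑_{λ₀∈Λ₊^k} S_{0λ₀}² = 1. Consequently, for the link of three vertical loops colored λ,μ,ν in S²×S¹, the normalized state sum (∑_{λ₀} (S_{λλ₀}/S_{0λ₀})(S_{μλ₀}/S_{0λ₀})(S_{νλ₀}/S_{0λ₀}) dim(λ₀)²) / (∑_{λ₀} dim(λ₀)²) equals N_{λμν}. -/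
/-- Using `S² = C` and the symmetry of `S`, `∑_{λ₀} S_{0λ₀}² = 1`.
Consequently, for three vertical loops colored `λ,μ,ν` in `S²×S¹`, the
normalized state sum
`(∑_{λ₀}(S_{λλ₀}/S_{0λ₀})(S_{μλ₀}/S_{0λ₀})(S_{νλ₀}/S_{0λ₀}) dim(λ₀)²)
  / (∑_{λ₀} dim(λ₀)²)` equals `N_{λμν}`. -/
theorem stmt_15 {ι : Type*} [Fintype ι] [DecidableEq ι] (z : ι)
    (cstar : ι → ι) (hinv : Function.Involutive cstar) (hzstar : cstar z = z)
    (S : Matrix ι ι ℂ) (hsym : S.IsSymm)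
    (hSS : S * S = Matrix.of fun l m => if l = cstar m then 1 else 0)
    (hz : ∀ s, S z s ≠ 0)
    (N : ι → ι → ι → ℂ)
    (hN : ∀ l m n, N l m n = ∑ s, S l s * S m s * S n s / S z s) :
    (∑ l, (S z l) ^ 2 = 1) ∧
      ∀ lam mu nu : ι,
        (∑ l, (S lam l / S z l) * (S mu l / S z l) * (S nu l / S z l) *
            (S l z / S z z) ^ 2) / (∑ l, (S l z / S z z) ^ 2)
          = N lam mu nu := by
  have hsymm : ∀ a b, S a b = S b a := fun a b => by
    have := congrFun (congrFun hsym a) b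
    simpa [Matrix.IsSymm, Matrix.transpose_apply] using this.symm
  have h1 : (∑ l, (S z l) ^ 2) = 1 := by
    have : (S * S) z z = 1 := by
      rw [hSS]; simp [hzstar]
    rw [Matrix.mul_apply] at this
    rw [← this]
    apply Finset.sum_congr rfl
    intro l _
    rw [sq, hsymm z l]
  refine ⟨h1, fun lam mu nu => ?_⟩
  have hzz : S z z ≠ 0 := hz z
  have hden : (∑ l, (S l z / S z z) ^ 2) = 1 / (S z z) ^ 2 := by
    calc (∑ l, (S l z / S z z) ^ 2) = (∑ l, (S z l) ^ 2) / (S z z) ^ 2 := by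
          rw [Finset.sum_div]
          exact Finset.sum_congr rfl fun l _ => by rw [div_pow, hsymm l z]
      _ = 1 / (S z z) ^ 2 := by rw [h1]
  have hnum : (∑ l, (S lam l / S z l) * (S mu l / S z l) * (S nu l / S z l) *
      (S l z / S z z) ^ 2) = N lam mu nu / (S z z) ^ 2 := by
    rw [hN, Finset.sum_div]
    apply Finset.sum_congr rfl
    intro l _
    have hl := hz l
    rw [hsymm l z]
    field_simp
  rw [hnum, hden]
  field_simp
end
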